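/- arXiv:2401.09117 — 2 statements merged into one kernel-verified Lean document; each statement's English description precedes it below -/
import Mathlib

section
/- Let d, q ≥ 2 and let ψ₁, …, ψ_N be polynomials in d variables each of degree at most 2 with zero constant term (each ψ_j is nonconstant). Suppose P(λ₁, …, λ_q) = Σ_{m ∈ [N]^q} b_m Σ_{π ∈ S_q} Π_{i=1}^q ψ_{m_{π(i)}}(λ_i) (with λ_i ∈ ℝ^d and real coefficients b_m) satisfies P(λ₁, …, λ_q) = P̃(λ₁ + ⋯ + λ_q) for some polynomial P̃ on ℝ^d with P̃(0) = 0. Then P is identically zero. -/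
open MvPolynomial

/-- Structural lemma: a symmetric sum
`P(λ₁,…,λ_q) = Σ_m b_m Σ_{π ∈ S_q} Π_i ψ_{m(π(i))}(λ_i)`
of products of `q ≥ 2` nonconstant polynomial factors of degree at most `2` with zero
constant term, each factor depending on a distinct variable `λ_i ∈ ℝ^d`, cannot be a
function `P̃(λ₁+⋯+λ_q)` of the sum alone with `P̃(0) = 0`, unless `P` vanishes identically. -/
theorem symmetric_product_sum_not_function_of_sum
    (d q N : ℕ) (hd : 2 ≤ d) (hq : 2 ≤ q)
    (ψ : Fin N → MvPolynomial (Fin d) ℝ)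
    (hdeg : ∀ j, (ψ j).totalDegree ≤ 2)
    (hconst : ∀ j, constantCoeff (ψ j) = 0)
    (hne : ∀ j, ψ j ≠ 0)
    (b : (Fin q → Fin N) → ℝ)
    (P : (Fin q → (Fin d → ℝ)) → ℝ)
    (hP : ∀ lam : Fin q → (Fin d → ℝ),
      P lam = ∑ m : Fin q → Fin N, b m *
        ∑ π : Equiv.Perm (Fin q), ∏ i : Fin q, eval (lam i) (ψ (m (π i))))
    (Ptil : MvPolynomial (Fin d) ℝ)
    (hPt0 : eval (0 : Fin d → ℝ) Ptil = 0)
    (hcomp : ∀ lam : Fin q → (Fin d → ℝ), P lam = eval (∑ i, lam i) Ptil) :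
    ∀ lam : Fin q → (Fin d → ℝ), P lam = 0 := by
  have hq0 : (0 : ℕ) < q := by omega
  -- First: P̃ vanishes everywhere.
  have hPt : ∀ x : Fin d → ℝ, eval x Ptil = 0 := by
    intro x
    set lam : Fin q → (Fin d → ℝ) := fun i => if i = ⟨0, hq0⟩ then x else 0 with hlam
    have h1 : P lam = 0 := by
      rw [hP]
      apply Finset.sum_eq_zero
      intro m _
      rw [mul_comm]
      apply mul_eq_zero_of_left
      apply Finset.sum_eq_zero
      intro π _
      have h2 : (⟨1, by omega⟩ : Fin q) ∈ Finset.univ := Finset.mem_univ _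
      apply Finset.prod_eq_zero h2
      have : lam ⟨1, by omega⟩ = 0 := by
        simp [hlam, Fin.ext_iff]
      rw [this]
      simpa using hconst (m (π ⟨1, by omega⟩))
    have h3 : (∑ i, lam i) = x := by
      rw [hlam]
      rw [Finset.sum_ite_eq' Finset.univ (⟨0, hq0⟩ : Fin q) (fun _ => x)]
      · simp
    have := hcomp lam
    rw [h3] at this
    rw [← this, h1]
  intro lam
  rw [hcomp lam, hPt]
end

section
/- Let Ψ : ℝ^d → [0, ∞) be bounded and integrable. Then for every integer q ≥ 2 and every r with 1 ≤ r ≤ q − 1, (1/(2T)^{2d}) ∫_{([−T,T]^d)^4} Ψ(t−s)^r Ψ(t'−s')^r Ψ(t'−t)^{q−r} Ψ(s−s')^{q−r} ds dt ds' dt' ≤ C/(2T)^d for a constant C depending only on Ψ, q, d (not on T). -/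
open MeasureTheory ENNReal


lemma my_lintegral_sub_left {G : Type*} [MeasurableSpace G] [AddGroup G] [MeasurableAdd G]
    [MeasurableNeg G] (μ : Measure G) [μ.IsAddLeftInvariant] [μ.IsNegInvariant]
    (f : G → ℝ≥0∞) (a : G) : ∫⁻ x, f (a - x) ∂μ = ∫⁻ x, f x ∂μ := by
  convert (lintegral_map_equiv f (MeasurableEquiv.subLeft a)).symm using 2
  · rfl
  · exact (Measure.map_sub_left_eq_self μ a).symm

lemma my_step1 {d : ℕ} (Φ' : (Fin d → ℝ) → ℝ≥0∞) {J : ℝ≥0∞}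
    (hJ1 : ∫⁻ x, Φ' x ∂volume ≤ J) (B : Set (Fin d → ℝ)) (a : Fin d → ℝ) :
    (∫⁻ x in B, Φ' (x - a) ∂volume) ≤ J :=
  (lintegral_mono' Measure.restrict_le_self le_rfl).trans
    ((lintegral_sub_right_eq_self Φ' a).le.trans hJ1)

lemma my_step2 {d : ℕ} (Φ' : (Fin d → ℝ) → ℝ≥0∞) {J : ℝ≥0∞}
    (hJ1 : ∫⁻ x, Φ' x ∂volume ≤ J) (B : Set (Fin d → ℝ)) (a : Fin d → ℝ) :
    (∫⁻ x in B, Φ' (a - x) ∂volume) ≤ J :=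
  (lintegral_mono' Measure.restrict_le_self le_rfl).trans
    ((my_lintegral_sub_left volume Φ' a).le.trans hJ1)

lemma my_core {d : ℕ} (Φ' : (Fin d → ℝ) → ℝ≥0∞) (hΦ' : Measurable Φ')
    (hfin : ∀ x, Φ' x ≠ ∞) (K J : ℝ≥0∞) (hK : K ≠ ∞) (hJ : J ≠ ∞)
    (hJ1 : ∫⁻ x, Φ' x ∂volume ≤ J)
    (B : Set (Fin d → ℝ)) (hB : MeasurableSet B) :
    (∫⁻ p in B ×ˢ B ×ˢ B ×ˢ B,
        (K * Φ' (p.2.1 - p.1) * Φ' (p.1 - p.2.2.1)) * Φ' (p.2.2.2 - p.2.1) ∂volume)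
      ≤ K * J * J * J * volume B := by
  set F : (Fin d → ℝ) × (Fin d → ℝ) × (Fin d → ℝ) × (Fin d → ℝ) → ℝ≥0∞ :=
    fun p => (K * Φ' (p.2.1 - p.1) * Φ' (p.1 - p.2.2.1)) * Φ' (p.2.2.2 - p.2.1) with hF
  have hFmeas : Measurable F := by
    apply Measurable.mul
    apply Measurable.mul
    · exact measurable_const.mul (hΦ'.comp (measurable_snd.fst.sub measurable_fst))
    · exact hΦ'.comp (measurable_fst.sub measurable_snd.snd.fst)
    · exact hΦ'.comp (measurable_snd.snd.snd.sub measurable_snd.fst)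
  have hres : (volume : Measure ((Fin d → ℝ) × (Fin d → ℝ) × (Fin d → ℝ) × (Fin d → ℝ))).restrict (B ×ˢ B ×ˢ B ×ˢ B) =
      (volume.restrict B).prod
        ((volume.restrict B).prod ((volume.restrict B).prod (volume.restrict B))) := by
    simp only [Measure.prod_restrict, ← Measure.volume_eq_prod]
  have hKJJ : K * J * J ≠ ∞ := ENNReal.mul_ne_top (ENNReal.mul_ne_top hK hJ) hJ
  calc (∫⁻ p in B ×ˢ B ×ˢ B ×ˢ B, F p ∂volume)
      = ∫⁻ p, F p ∂((volume.restrict B).prod ((volume.restrict B).prod ((volume.restrict B).prod (volume.restrict B)))) := by rw [← hres]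
    _ = ∫⁻ s, ∫⁻ y, F (s, y) ∂((volume.restrict B).prod ((volume.restrict B).prod (volume.restrict B))) ∂(volume.restrict B) :=
        lintegral_prod _ hFmeas.aemeasurable
    _ ≤ ∫⁻ _ in B, K * J * J * J ∂volume := by
        apply lintegral_mono
        intro s
        calc (∫⁻ y, F (s, y) ∂((volume.restrict B).prod ((volume.restrict B).prod (volume.restrict B))))
            = ∫⁻ t, ∫⁻ z, F (s, (t, z)) ∂((volume.restrict B).prod (volume.restrict B)) ∂(volume.restrict B) :=
              lintegral_prod _ (hFmeas.comp measurable_prodMk_left).aemeasurable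
          _ ≤ ∫⁻ t in B, (K * J * J) * Φ' (t - s) ∂volume := by
              apply lintegral_mono
              intro t
              calc (∫⁻ z, F (s, (t, z)) ∂((volume.restrict B).prod (volume.restrict B)))
                  = ∫⁻ s', ∫⁻ t', F (s, (t, (s', t'))) ∂(volume.restrict B) ∂(volume.restrict B) :=
                    lintegral_prod _
                      ((hFmeas.comp
                        (measurable_prodMk_left.comp measurable_prodMk_left)).aemeasurable)
                _ = ∫⁻ s' in B, (K * Φ' (t - s) * Φ' (s - s')) *
                      (∫⁻ t' in B, Φ' (t' - t) ∂volume) ∂volume := by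
                    simp only [hF]
                    exact lintegral_congr fun s' => lintegral_const_mul' _ _
                      (ENNReal.mul_ne_top (ENNReal.mul_ne_top hK (hfin _)) (hfin _))
                _ ≤ ∫⁻ s' in B, (K * Φ' (t - s) * Φ' (s - s')) * J ∂volume :=
                    lintegral_mono fun s' => mul_le_mul_right (my_step1 Φ' hJ1 B t) _
                _ = ∫⁻ s' in B, (K * Φ' (t - s) * J) * Φ' (s - s') ∂volume :=
                    lintegral_congr fun s' => mul_right_comm _ _ _
                _ = (K * Φ' (t - s) * J) * ∫⁻ s' in B, Φ' (s - s') ∂volume :=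
                    lintegral_const_mul' _ _
                      (ENNReal.mul_ne_top (ENNReal.mul_ne_top hK (hfin _)) hJ)
                _ ≤ (K * Φ' (t - s) * J) * J := mul_le_mul_right (my_step2 Φ' hJ1 B s) _
                _ = (K * J * J) * Φ' (t - s) := by ring
          _ = (K * J * J) * ∫⁻ t in B, Φ' (t - s) ∂volume :=
              lintegral_const_mul' _ _ hKJJ
          _ ≤ (K * J * J) * J := mul_le_mul_right (my_step1 Φ' hJ1 B s) _
          _ = K * J * J * J := rfl
    _ = K * J * J * J * volume B := setLIntegral_const _ _


/-- Contraction estimate: for bounded integrable `Ψ ≥ 0` on `ℝ^d`, `q ≥ 2`,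
`1 ≤ r ≤ q−1`, the normalized fourfold integral of
`Ψ(t−s)^r Ψ(t'−s')^r Ψ(t'−t)^{q−r} Ψ(s−s')^{q−r}` over `([−T,T]^d)⁴`
is bounded by `C/(2T)^d` with `C` independent of `T`. -/
theorem contraction_integral_bound (d : ℕ) (hd : 0 < d)
    (Ψ : (Fin d → ℝ) → ℝ) (hnonneg : ∀ x, 0 ≤ Ψ x)
    (hbdd : ∃ M : ℝ, ∀ x, Ψ x ≤ M) (hint : Integrable Ψ volume) :
    ∀ q r : ℕ, 2 ≤ q → 1 ≤ r → r ≤ q - 1 →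
    ∃ C : ℝ, ∀ T : ℝ, 0 < T →
      (1 / (2 * T) ^ (2 * d)) *
        ∫ p in ((Set.pi Set.univ fun _ : Fin d => Set.Icc (-T) T) ×ˢ
                (Set.pi Set.univ fun _ : Fin d => Set.Icc (-T) T) ×ˢ
                (Set.pi Set.univ fun _ : Fin d => Set.Icc (-T) T) ×ˢ
                (Set.pi Set.univ fun _ : Fin d => Set.Icc (-T) T)),
          Ψ (p.2.1 - p.1) ^ r * Ψ (p.2.2.2 - p.2.2.1) ^ r *
            Ψ (p.2.2.2 - p.2.1) ^ (q - r) * Ψ (p.1 - p.2.2.1) ^ (q - r) ∂volume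
      ≤ C / (2 * T) ^ d := by
  intro q r hq hr hrq
  classical
  obtain ⟨M, hM⟩ := hbdd
  set M' : ℝ := max M 1 with hM'def
  have hM'1 : (1:ℝ) ≤ M' := le_max_right _ _
  have hM'0 : (0:ℝ) ≤ M' := zero_le_one.trans hM'1
  have hΨM' : ∀ x, Ψ x ≤ M' := fun x => (hM x).trans (le_max_left _ _)
  have hqr1 : 1 ≤ q - r := by omega
  -- measurable majorant Φ of Ψ
  have hae : volume {x | Ψ x ≠ hint.1.mk Ψ x} = 0 := by
    have h := hint.1.ae_eq_mk
    rwa [Filter.EventuallyEq, ae_iff] at h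
  obtain ⟨N, hNsub, hNmeas, hNnull⟩ := exists_measurable_superset_of_null hae
  set Φ : (Fin d → ℝ) → ℝ := fun x => if x ∈ N then M' else hint.1.mk Ψ x with hΦdef
  have hmkmeas : Measurable (hint.1.mk Ψ) := hint.1.stronglyMeasurable_mk.measurable
  have hΦmeas : Measurable Φ := Measurable.ite hNmeas measurable_const hmkmeas
  have heq : ∀ x ∉ N, Ψ x = hint.1.mk Ψ x := by
    intro x hx
    by_contra h
    exact hx (hNsub h)
  have hΨΦ : ∀ x, Ψ x ≤ Φ x := by
    intro x
    by_cases hx : x ∈ N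
    · simp only [hΦdef, if_pos hx]; exact hΨM' x
    · simp only [hΦdef, if_neg hx]; exact (heq x hx).le
  have hΦ0 : ∀ x, 0 ≤ Φ x := by
    intro x
    by_cases hx : x ∈ N
    · simp only [hΦdef, if_pos hx]; exact hM'0
    · simp only [hΦdef, if_neg hx]; exact (heq x hx) ▸ hnonneg x
  have hΦM : ∀ x, Φ x ≤ M' := by
    intro x
    by_cases hx : x ∈ N
    · simp only [hΦdef, if_pos hx]; exact le_rfl
    · simp only [hΦdef, if_neg hx]; exact (heq x hx) ▸ hΨM' x
  have hΦae : Ψ =ᵐ[volume] Φ := by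
    filter_upwards [measure_eq_zero_iff_ae_notMem.mp hNnull] with x hx
    simp only [hΦdef, if_neg hx]
    exact heq x hx
  have hΦint : Integrable Φ volume := hint.congr hΦae
  set Φ' : (Fin d → ℝ) → ℝ≥0∞ := fun x => ENNReal.ofReal (Φ x) with hΦ'def
  have hΦ'meas : Measurable Φ' := ENNReal.measurable_ofReal.comp hΦmeas
  have hΦ'fin : ∀ x, Φ' x ≠ ∞ := fun x => ENNReal.ofReal_ne_top
  set J : ℝ≥0∞ := ∫⁻ x, Φ' x ∂volume with hJdef
  have hJtop : J ≠ ∞ := hΦint.lintegral_lt_top.ne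
  set m : ℝ≥0∞ := ENNReal.ofReal M' with hmdef
  set K : ℝ≥0∞ := m ^ (2 * q - 3) with hKdef
  have hKtop : K ≠ ∞ := by
    simp only [hKdef, hmdef]
    exact pow_ne_top ENNReal.ofReal_ne_top
  refine ⟨M' ^ (2 * q - 3) * J.toReal ^ 3, ?_⟩
  intro T hT
  have hT2 : (0:ℝ) < 2 * T := by linarith
  have hpowd : (0:ℝ) < (2 * T) ^ d := pow_pos hT2 d
  have hC0 : (0:ℝ) ≤ M' ^ (2 * q - 3) * J.toReal ^ 3 :=
    mul_nonneg (pow_nonneg hM'0 _) (pow_nonneg ENNReal.toReal_nonneg _)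
  set B := Set.pi Set.univ fun _ : Fin d => Set.Icc (-T) T with hBdef
  have hBmeas : MeasurableSet B := MeasurableSet.univ_pi fun _ => measurableSet_Icc
  have hvolB : volume B = ENNReal.ofReal (2 * T) ^ d := by
    rw [hBdef, volume_pi_pi]
    simp [Real.volume_Icc, Finset.prod_const, two_mul]
  set f : (Fin d → ℝ) × (Fin d → ℝ) × (Fin d → ℝ) × (Fin d → ℝ) → ℝ :=
    fun p => Ψ (p.2.1 - p.1) ^ r * Ψ (p.2.2.2 - p.2.2.1) ^ r *
      Ψ (p.2.2.2 - p.2.1) ^ (q - r) * Ψ (p.1 - p.2.2.1) ^ (q - r) with hfdef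
  by_cases hfi : IntegrableOn f (B ×ˢ B ×ˢ B ×ˢ B) volume
  · -- pointwise bound in ℝ≥0∞
    have hofΨm : ∀ x, ENNReal.ofReal (Ψ x) ≤ m := fun x => ENNReal.ofReal_le_ofReal (hΨM' x)
    have hofΨΦ : ∀ x, ENNReal.ofReal (Ψ x) ≤ Φ' x := fun x => ENNReal.ofReal_le_ofReal (hΨΦ x)
    have hfactor : ∀ (x : Fin d → ℝ) (n : ℕ), 1 ≤ n →
        ENNReal.ofReal (Ψ x) ^ n ≤ m ^ (n - 1) * Φ' x := by
      intro x n hn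
      have h1 : ENNReal.ofReal (Ψ x) ^ n = ENNReal.ofReal (Ψ x) ^ (n - 1) * ENNReal.ofReal (Ψ x) := by
        rw [← pow_succ]
        congr 1
        omega
      rw [h1]
      exact mul_le_mul' (pow_le_pow_left' (hofΨm x) _) (hofΨΦ x)
    have hptwise : ∀ p : (Fin d → ℝ) × (Fin d → ℝ) × (Fin d → ℝ) × (Fin d → ℝ),
        ENNReal.ofReal (f p) ≤
          (K * Φ' (p.2.1 - p.1) * Φ' (p.1 - p.2.2.1)) * Φ' (p.2.2.2 - p.2.1) := by
      intro p
      have hsplit : ENNReal.ofReal (f p) =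
          ENNReal.ofReal (Ψ (p.2.1 - p.1)) ^ r * ENNReal.ofReal (Ψ (p.2.2.2 - p.2.2.1)) ^ r *
            ENNReal.ofReal (Ψ (p.2.2.2 - p.2.1)) ^ (q - r) *
            ENNReal.ofReal (Ψ (p.1 - p.2.2.1)) ^ (q - r) := by
        simp only [hfdef]
        rw [ENNReal.ofReal_mul (mul_nonneg (mul_nonneg (pow_nonneg (hnonneg _) _)
            (pow_nonneg (hnonneg _) _)) (pow_nonneg (hnonneg _) _)),
          ENNReal.ofReal_mul (mul_nonneg (pow_nonneg (hnonneg _) _) (pow_nonneg (hnonneg _) _)),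
          ENNReal.ofReal_mul (pow_nonneg (hnonneg _) _),
          ENNReal.ofReal_pow (hnonneg _), ENNReal.ofReal_pow (hnonneg _),
          ENNReal.ofReal_pow (hnonneg _), ENNReal.ofReal_pow (hnonneg _)]
      rw [hsplit]
      calc ENNReal.ofReal (Ψ (p.2.1 - p.1)) ^ r * ENNReal.ofReal (Ψ (p.2.2.2 - p.2.2.1)) ^ r *
            ENNReal.ofReal (Ψ (p.2.2.2 - p.2.1)) ^ (q - r) *
            ENNReal.ofReal (Ψ (p.1 - p.2.2.1)) ^ (q - r)
          ≤ (m ^ (r - 1) * Φ' (p.2.1 - p.1)) * m ^ r *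
              (m ^ (q - r - 1) * Φ' (p.2.2.2 - p.2.1)) *
              (m ^ (q - r - 1) * Φ' (p.1 - p.2.2.1)) := by
            refine mul_le_mul' (mul_le_mul' (mul_le_mul' (hfactor _ r hr) ?_)
              (hfactor _ (q - r) hqr1)) (hfactor _ (q - r) hqr1)
            exact pow_le_pow_left' (hofΨm _) _
        _ = (m ^ (r - 1) * m ^ r * m ^ (q - r - 1) * m ^ (q - r - 1)) *
              (Φ' (p.2.1 - p.1) * Φ' (p.1 - p.2.2.1) * Φ' (p.2.2.2 - p.2.1)) := by ring
        _ = (K * Φ' (p.2.1 - p.1) * Φ' (p.1 - p.2.2.1)) * Φ' (p.2.2.2 - p.2.1) := by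
            rw [← pow_add, ← pow_add, ← pow_add]
            have : r - 1 + r + (q - r - 1) + (q - r - 1) = 2 * q - 3 := by omega
            rw [this, ← hKdef]
            ring
    -- lintegral bound
    have hlint : (∫⁻ p in B ×ˢ B ×ˢ B ×ˢ B, ENNReal.ofReal (f p) ∂volume)
        ≤ K * J * J * J * volume B :=
      le_trans (lintegral_mono fun p => hptwise p)
        (my_core Φ' hΦ'meas hΦ'fin K J hKtop hJtop le_rfl B hBmeas)
    have hRHSne : K * J * J * J * volume B ≠ ∞ := by
      rw [hvolB]
      exact ENNReal.mul_ne_top (ENNReal.mul_ne_top (ENNReal.mul_ne_top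
        (ENNReal.mul_ne_top hKtop hJtop) hJtop) hJtop) (pow_ne_top ENNReal.ofReal_ne_top)
    have hmain : (∫ p in B ×ˢ B ×ˢ B ×ˢ B, f p ∂volume)
        ≤ M' ^ (2 * q - 3) * J.toReal ^ 3 * (2 * T) ^ d := by
      rw [integral_eq_lintegral_of_nonneg_ae
        (Filter.Eventually.of_forall fun p =>
          mul_nonneg (mul_nonneg (mul_nonneg (pow_nonneg (hnonneg _) _)
            (pow_nonneg (hnonneg _) _)) (pow_nonneg (hnonneg _) _))
            (pow_nonneg (hnonneg _) _)) hfi.1]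
      calc (∫⁻ p in B ×ˢ B ×ˢ B ×ˢ B, ENNReal.ofReal (f p) ∂volume).toReal
          ≤ (K * J * J * J * volume B).toReal := ENNReal.toReal_mono hRHSne hlint
        _ = M' ^ (2 * q - 3) * J.toReal ^ 3 * (2 * T) ^ d := by
            rw [hvolB, ENNReal.toReal_mul, ENNReal.toReal_mul, ENNReal.toReal_mul,
              ENNReal.toReal_mul, ENNReal.toReal_pow, ENNReal.toReal_pow,
              hmdef, ENNReal.toReal_ofReal hM'0, ENNReal.toReal_ofReal hT2.le]
            ring
    calc (1 / (2 * T) ^ (2 * d)) * ∫ p in B ×ˢ B ×ˢ B ×ˢ B, f p ∂volume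
        ≤ (1 / (2 * T) ^ (2 * d)) * (M' ^ (2 * q - 3) * J.toReal ^ 3 * (2 * T) ^ d) := by
          exact mul_le_mul_of_nonneg_left hmain
            (one_div_nonneg.mpr (pow_pos hT2 _).le)
      _ = M' ^ (2 * q - 3) * J.toReal ^ 3 / (2 * T) ^ d := by
          rw [show 2 * d = d + d from two_mul d, pow_add]
          field_simp
  · rw [integral_undef hfi, mul_zero]
    exact div_nonneg hC0 hpowd.le
end
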